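/- The value-frequency estimator of PB-GRR is unbiased: with F_x users holding value x (all within category S containing F_S users), each report equals x with probability p if truth is x, p_s if truth is in S but ≠ x, and p_s̄ if truth is outside S, the estimator F̂_x = (C_x - F̂_S(p_s - p_s̄) - N·p_s̄)/(p - p_s) satisfies E[F̂_x] = F_x, given E[F̂_S] = F_S and p ≠ p_s. -/

import Mathlib

open MeasureTheory ProbabilityTheory

theorem stmt_16 {Ω : Type*} [MeasureSpace Ω] [IsProbabilityMeasure (ℙ : Measure Ω)]
    (N : ℕ) (t : Fin N → Fin 3) (R : Fin N → Ω → Bool) (FhatS : Ω → ℝ)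
    (p ps psb : ℝ) (hpps : p ≠ ps)
    (hp0 : 0 ≤ p) (hp1 : p ≤ 1) (hps0 : 0 ≤ ps) (hps1 : ps ≤ 1)
    (hpsb0 : 0 ≤ psb) (hpsb1 : psb ≤ 1)
    (hmeas : ∀ i, Measurable (R i))
    (hprob : ∀ i, ℙ {ω | R i ω = true}
      = ENNReal.ofReal (if t i = 0 then p else if t i = 1 then ps else psb))
    (hFS_int : Integrable FhatS)
    (hFS : ∫ ω, FhatS ω
      = ((Finset.univ.filter (fun i => t i = 0 ∨ t i = 1)).card : ℝ)) :
    ∫ ω, ((((Finset.univ.filter (fun i => R i ω = true)).card : ℝ)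
          - FhatS ω * (ps - psb) - N * psb) / (p - ps))
      = ((Finset.univ.filter (fun i => t i = 0)).card : ℝ) := by
  classical
  set q : Fin N → ℝ := fun i => if t i = 0 then p else if t i = 1 then ps else psb with hqdef
  have hq0 : ∀ i, 0 ≤ q i := by
    intro i; simp only [q]; split_ifs <;> assumption
  have hmeasSet : ∀ i, MeasurableSet {ω | R i ω = true} := fun i =>
    (hmeas i) (MeasurableSet.singleton true)
  have hint : ∀ i, Integrable (fun ω => (if R i ω = true then (1:ℝ) else 0)) := by
    intro i
    have heq : (fun ω => if R i ω = true then (1:ℝ) else 0)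
        = Set.indicator {ω | R i ω = true} (fun _ => (1:ℝ)) := by
      ext ω; simp [Set.indicator_apply]
    rw [heq]
    exact (integrable_const (1:ℝ)).indicator (hmeasSet i)
  have hival : ∀ i, (∫ ω, (if R i ω = true then (1:ℝ) else 0)) = q i := by
    intro i
    have h1 : (∫ ω, (if R i ω = true then (1:ℝ) else 0))
        = ∫ ω, Set.indicator {ω | R i ω = true} (fun _ => (1:ℝ)) ω := by
      simp [Set.indicator_apply]
    rw [h1, integral_indicator_const _ (hmeasSet i), measureReal_def, hprob i, smul_eq_mul, mul_one,
      ENNReal.toReal_ofReal (hq0 i)]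
  have hcard : ∀ ω, ((Finset.univ.filter (fun i => R i ω = true)).card : ℝ)
      = ∑ i, (if R i ω = true then (1:ℝ) else 0) := by
    intro ω
    rw [Finset.card_filter]
    push_cast
    rfl
  have hCint : Integrable (fun ω => ((Finset.univ.filter (fun i => R i ω = true)).card : ℝ)) := by
    have h : (fun ω => ((Finset.univ.filter (fun i => R i ω = true)).card : ℝ))
        = fun ω => ∑ i, (if R i ω = true then (1:ℝ) else 0) := funext hcard
    rw [h]; exact integrable_finset_sum _ (fun i _ => hint i)
  have hCval : (∫ ω, ((Finset.univ.filter (fun i => R i ω = true)).card : ℝ)) = ∑ i, q i := by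
    simp_rw [hcard]
    rw [integral_finset_sum _ (fun i _ => hint i)]
    exact Finset.sum_congr rfl (fun i _ => hival i)
  -- counting
  set A := (Finset.univ.filter (fun i => t i = 0)).card with hA
  set B := (Finset.univ.filter (fun i : Fin N => ¬ t i = 0 ∧ t i = 1)).card with hB
  set C := (Finset.univ.filter (fun i : Fin N => ¬ t i = 0 ∧ ¬ t i = 1)).card with hC
  have hsumq : ∑ i, q i = p * A + ps * B + psb * C := by
    simp only [q]
    simp only [Finset.sum_ite, Finset.sum_const, Finset.filter_filter, nsmul_eq_mul]
    ring
  have hAB : (Finset.univ.filter (fun i : Fin N => t i = 0 ∨ t i = 1)).card = A + B := by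
    have hfeq : Finset.univ.filter (fun i : Fin N => t i = 0 ∨ t i = 1)
        = Finset.univ.filter (fun i => t i = 0)
          ∪ Finset.univ.filter (fun i : Fin N => ¬ t i = 0 ∧ t i = 1) := by
      ext i
      simp only [Finset.mem_filter, Finset.mem_union, Finset.mem_univ, true_and]
      tauto
    have hdisj : Disjoint (Finset.univ.filter (fun i : Fin N => t i = 0))
        (Finset.univ.filter (fun i : Fin N => ¬ t i = 0 ∧ t i = 1)) := by
      rw [Finset.disjoint_left]
      intro a ha hb
      simp only [Finset.mem_filter] at ha hb
      exact hb.2.1 ha.2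
    rw [hfeq, Finset.card_union_of_disjoint hdisj]
  have hN : A + B + C = N := by
    have h1 : A + (Finset.univ.filter (fun i : Fin N => ¬ t i = 0)).card = N := by
      simpa using Finset.card_filter_add_card_filter_not (s := Finset.univ)
        (p := fun i : Fin N => t i = 0)
    have h2 : B + C = (Finset.univ.filter (fun i : Fin N => ¬ t i = 0)).card := by
      have := Finset.card_filter_add_card_filter_not
        (s := Finset.univ.filter (fun i : Fin N => ¬ t i = 0)) (p := fun i : Fin N => t i = 1)
      rw [Finset.filter_filter, Finset.filter_filter] at this
      simpa [hB, hC] using this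
    omega
  -- main computation
  have hps' : p - ps ≠ 0 := sub_ne_zero.mpr hpps
  have h2 : Integrable (fun ω => FhatS ω * (ps - psb)) := hFS_int.mul_const _
  have h1 : Integrable (fun ω =>
      ((Finset.univ.filter (fun i => R i ω = true)).card : ℝ) - FhatS ω * (ps - psb)) :=
    hCint.sub h2
  rw [MeasureTheory.integral_div, integral_sub h1 (integrable_const _),
      integral_sub hCint h2, integral_mul_const, integral_const, hCval, hFS, hsumq, hAB]
  have hNr : (N : ℝ) = (A : ℝ) + B + C := by exact_mod_cast hN.symm
  simp only [probReal_univ, one_smul]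
  push_cast
  rw [hNr]
  field_simp
  ring
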